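/- Let V be a finite-dimensional real inner product space, 𝔤 ⊆ 𝔰𝔬(V) a Lie subalgebra acting irreducibly on V, and I : V → V an orthogonal complex structure (I² = -id, Iᵀ = -I) commuting with every element of 𝔤. Let R : Λ²V → Λ²V be a self-adjoint operator satisfying the Bianchi identity with image contained in 𝔤, whose elements all commute with I. Then for all X, Y ∈ V, the complex trace satisfies Tr_ℂ(R(X ∧ IY)) = -i·Ric(X,Y), where 2Tr_ℂ(ω) = Tr(ω) - i·Tr(Iω) and Ric(X,Y) = Σⱼ ⟨R(eⱼ∧Y)X, eⱼ⟩ for an orthonormal basis (eⱼ). -/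
import Mathlib


open scoped RealInnerProductSpace BigOperators

private lemma trace_onb' {V : Type*} [NormedAddCommGroup V] [InnerProductSpace ℝ V]
    [FiniteDimensional ℝ V] {n : ℕ} (e : OrthonormalBasis (Fin n) ℝ V) (f : V →ₗ[ℝ] V) :
    LinearMap.trace ℝ V f = ∑ j, ⟪e j, f (e j)⟫ := by
  rw [LinearMap.trace_eq_matrix_trace ℝ e.toBasis, Matrix.trace]
  congr 1
  ext j
  rw [Matrix.diag_apply, LinearMap.toMatrix_apply, OrthonormalBasis.coe_toBasis,
    OrthonormalBasis.coe_toBasis_repr_apply, OrthonormalBasis.repr_apply_apply]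

/-- Let `𝔤 ⊆ 𝔰𝔬(V)` be a Lie subalgebra acting irreducibly on `V`, and
`I` an orthogonal complex structure commuting with every element of `𝔤`.  Let `R` be a
self-adjoint curvature operator satisfying the Bianchi identity with image contained in `𝔤`.
Then the complex trace satisfies `Tr_ℂ(R(X ∧ IY)) = -i·Ric(X,Y)`, i.e.
`Tr(ω) - i·Tr(I∘ω) = -2i·Ric(X,Y)` for `ω = R(X ∧ IY)`,
where `Ric(X,Y) = Σⱼ ⟨R(eⱼ∧Y)X, eⱼ⟩`. -/
theorem complex_trace_of_curvature_equals_ricci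
    {V : Type*} [NormedAddCommGroup V] [InnerProductSpace ℝ V] [FiniteDimensional ℝ V]
    {n : ℕ} (e : OrthonormalBasis (Fin n) ℝ V)
    (R : V →ₗ[ℝ] V →ₗ[ℝ] (V →ₗ[ℝ] V))
    (halt : ∀ X Y : V, R X Y = -R Y X)
    (hskew : ∀ X Y : V, LinearMap.adjoint (R X Y) = -(R X Y))
    (hpair : ∀ X Y Z W : V, ⟪R X Y Z, W⟫ = ⟪R Z W X, Y⟫)
    (hbianchi : ∀ X Y Z : V, R X Y Z + R Y Z X + R Z X Y = 0)
    (𝔤 : Submodule ℝ (V →ₗ[ℝ] V))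
    (h𝔤skew : ∀ g ∈ 𝔤, LinearMap.adjoint g = -g)
    (h𝔤lie : ∀ g ∈ 𝔤, ∀ h ∈ 𝔤, g ∘ₗ h - h ∘ₗ g ∈ 𝔤)
    (h𝔤irr : ∀ W : Submodule ℝ V, (∀ g ∈ 𝔤, W.map g ≤ W) → W = ⊥ ∨ W = ⊤)
    (hR𝔤 : ∀ X Y : V, R X Y ∈ 𝔤)
    (I : V →ₗ[ℝ] V)
    (hI2 : I ∘ₗ I = -LinearMap.id)
    (hIskew : LinearMap.adjoint I = -I)
    (hIcomm : ∀ g ∈ 𝔤, I ∘ₗ g = g ∘ₗ I)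
    (X Y : V) :
    ((LinearMap.trace ℝ V (R X (I Y)) : ℝ) : ℂ)
        - Complex.I * ((LinearMap.trace ℝ V (I ∘ₗ R X (I Y)) : ℝ) : ℂ)
      = -2 * Complex.I * ((∑ j, ⟪R (e j) Y X, e j⟫ : ℝ) : ℂ) := by
  -- basic consequences
  have hII : ∀ v : V, I (I v) = -v := by
    intro v
    have := LinearMap.congr_fun hI2 v
    simpa using this
  have hIskew' : ∀ u v : V, ⟪u, I v⟫ = -⟪I u, v⟫ := by
    intro u v
    have h := LinearMap.adjoint_inner_right I u v
    rw [hIskew, LinearMap.neg_apply, inner_neg_right] at h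
    linarith
  have hIinner : ∀ u v : V, ⟪I u, I v⟫ = ⟪u, v⟫ := by
    intro u v
    have h := hIskew' u (I v)
    rw [hII v, inner_neg_right] at h
    linarith
  have hcomm : ∀ A B v : V, I (R A B v) = R A B (I v) := fun A B v =>
    LinearMap.congr_fun (hIcomm _ (hR𝔤 A B)) v
  have hRskew' : ∀ A B u v : V, ⟪R A B u, v⟫ = -⟪u, R A B v⟫ := by
    intro A B u v
    have h := LinearMap.adjoint_inner_right (R A B) u v
    rw [hskew, LinearMap.neg_apply, inner_neg_right] at h
    linarith
  -- the linear map `u ↦ R u W U`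
  let Φ : V → V → (V →ₗ[ℝ] V) := fun W U =>
    { toFun := fun u => R u W U
      map_add' := by intro a b; simp
      map_smul' := by intro c a; simp }
  have hΦ : ∀ W U u : V, Φ W U u = R u W U := fun _ _ _ => rfl
  -- key: for any orthonormal basis f, ∑ ⟪R fⱼ W fⱼ, U⟫ = -Tr(Φ W U)
  have key : ∀ (f : OrthonormalBasis (Fin n) ℝ V) (W U : V),
      ∑ j, ⟪R (f j) W (f j), U⟫ = - LinearMap.trace ℝ V (Φ W U) := by
    intro f W U
    rw [trace_onb' f, ← Finset.sum_neg_distrib]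
    refine Finset.sum_congr rfl fun j _ => ?_
    simp only [hΦ]
    exact hRskew' (f j) W (f j) U
  -- the orthonormal basis I(eⱼ)
  let Ieqv : V ≃ₗ[ℝ] V := LinearEquiv.ofLinear I (-I)
    (by ext v; simp [hII v]) (by ext v; simp [hII v])
  let Iiso : V ≃ₗᵢ[ℝ] V := Ieqv.isometryOfInner (fun u v => hIinner u v)
  let f : OrthonormalBasis (Fin n) ℝ V := e.map Iiso
  have hf : ∀ j, f j = I (e j) := fun j => rfl
  -- Ricci as a trace
  have hRic : ∑ j, ⟪R (e j) Y X, e j⟫ = LinearMap.trace ℝ V (Φ Y X) := by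
    rw [trace_onb' e]
    exact Finset.sum_congr rfl fun j _ => by rw [hΦ, real_inner_comm]
  have hTrsymm : LinearMap.trace ℝ V (Φ X Y) = LinearMap.trace ℝ V (Φ Y X) := by
    rw [trace_onb' e, trace_onb' e]
    have h1 : ∑ j, ⟪e j, Φ X Y (e j)⟫ = ∑ j, -⟪R (e j) Y (e j), X⟫ := by
      refine Finset.sum_congr rfl fun j _ => ?_
      rw [hΦ, real_inner_comm (R (e j) X Y) (e j), hpair (e j) X Y (e j), halt Y (e j)]
      simp
    have h2 : ∑ j, ⟪e j, Φ Y X (e j)⟫ = ∑ j, -⟪R (e j) Y (e j), X⟫ := by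
      refine Finset.sum_congr rfl fun j _ => ?_
      rw [hΦ]
      have h := hRskew' (e j) Y (e j) X
      linarith
    rw [h1, h2]
  -- trace of ω is zero
  have tr1 : LinearMap.trace ℝ V (R X (I Y)) = 0 := by
    rw [trace_onb' e]
    refine Finset.sum_eq_zero fun j _ => ?_
    have := hRskew' X (I Y) (e j) (e j)
    rw [real_inner_comm] at this
    linarith [this]
  -- trace of I∘ω is 2·Ric
  have tr2 : LinearMap.trace ℝ V (I ∘ₗ R X (I Y)) = 2 * ∑ j, ⟪R (e j) Y X, e j⟫ := by
    rw [trace_onb' e]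
    have step : ∀ j, ⟪e j, (I ∘ₗ R X (I Y)) (e j)⟫
        = ⟪R (I (e j)) X (e j), I Y⟫ + ⟪R X (e j) (I (e j)), I Y⟫ := by
      intro j
      have h1 : ⟪e j, (I ∘ₗ R X (I Y)) (e j)⟫ = -⟪R (e j) (I (e j)) X, I Y⟫ := by
        rw [LinearMap.comp_apply, hIskew' (e j) (R X (I Y) (e j)),
          real_inner_comm (R X (I Y) (e j)) (I (e j)), hpair X (I Y) (e j) (I (e j))]
      have h2 : R (e j) (I (e j)) X = -R (I (e j)) X (e j) - R X (e j) (I (e j)) := by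
        have h := hbianchi (e j) (I (e j)) X
        rw [add_assoc] at h
        rw [eq_neg_of_add_eq_zero_left h]
        abel
      rw [h1, h2, inner_sub_left, inner_neg_left]
      ring
    rw [Finset.sum_congr rfl fun j _ => step j, Finset.sum_add_distrib]
    have sumB : ∑ j, ⟪R X (e j) (I (e j)), I Y⟫ = ∑ j, ⟪R (e j) Y X, e j⟫ := by
      refine Finset.sum_congr rfl fun j _ => ?_
      rw [← hcomm X (e j) (e j), hIinner, hpair X (e j) (e j) Y]
    have sumA : ∑ j, ⟪R (I (e j)) X (e j), I Y⟫ = ∑ j, ⟪R (e j) Y X, e j⟫ := by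
      have hA : ∀ j, ⟪R (I (e j)) X (e j), I Y⟫ = -⟪R (f j) X (f j), Y⟫ := by
        intro j
        have he : e j = -I (I (e j)) := by rw [hII (e j)]; simp
        calc ⟪R (I (e j)) X (e j), I Y⟫
            = ⟪R (I (e j)) X (-I (I (e j))), I Y⟫ := by rw [← he]
          _ = -⟪I (R (I (e j)) X (I (e j))), I Y⟫ := by
              rw [map_neg, inner_neg_left, hcomm]
          _ = -⟪R (f j) X (f j), Y⟫ := by rw [hIinner, hf]
      rw [Finset.sum_congr rfl fun j _ => hA j, Finset.sum_neg_distrib, key f X Y,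
        neg_neg, hTrsymm, hRic]
    rw [sumA, sumB]
    ring
  rw [tr1, tr2]
  push_cast
  ring
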